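/- Let Φ(iy) = Im A₊(iy) where A₊(iy) = −i(iy−3)² ∫₀¹ √(3s+iy) dμ(s) with dμ(s) = √(s(1−s²))/(1+s)⁴ ds, y > 0. Then Φ(3i-value) i.e. Φ at y=3 is strictly negative, namely Im A₊(3i) = −18∫₀¹ Im√(3s+3i) dμ(s) < 0, while Φ(iy) → +∞ as y → +∞ (Φ(iy) ∼ (√2/2) y^{5/2} ∫₀¹ dμ(s)). Hence there exists y* > 3 with Φ(iy*) = 0. -/

import Mathlib

open Complex Filter Topology

/-- `A₊(iy) = −i(iy−3)² ∫₀¹ √(3s+iy) dμ(s)`, `dμ(s) = √(s(1−s²))/(1+s)⁴ ds`. -/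
noncomputable def AplusI (y : ℝ) : ℂ :=
  -Complex.I * (Complex.I * (y : ℂ) - 3) ^ 2 *
    ∫ s in (0:ℝ)..1,
      ((3 * (s : ℂ)) + Complex.I * (y : ℂ)) ^ ((1 : ℂ) / 2) *
        ((Real.sqrt (s * (1 - s ^ 2)) / (1 + s) ^ 4 : ℝ) : ℂ)

namespace PhiAux

open MeasureTheory Set intervalIntegral

noncomputable def wf (s : ℝ) : ℝ := Real.sqrt (s * (1 - s ^ 2)) / (1 + s) ^ 4

lemma wf_nonneg (s : ℝ) : 0 ≤ wf s := div_nonneg (Real.sqrt_nonneg _) (by positivity)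

lemma wf_contOn : ContinuousOn wf (Icc (0:ℝ) 1) := by
  apply ContinuousOn.div
  · exact (Real.continuous_sqrt.comp (by continuity)).continuousOn
  · fun_prop
  · intro s hs
    have := hs.1
    positivity

lemma wf_pos {s : ℝ} (hs : s ∈ Ioo (0:ℝ) 1) : 0 < wf s := by
  have h1 : 0 < s * (1 - s ^ 2) := by nlinarith [hs.1, hs.2]
  exact div_pos (Real.sqrt_pos.mpr h1) (by nlinarith [hs.1])

lemma wf_intable : IntervalIntegrable wf MeasureTheory.volume 0 1 := by
  apply ContinuousOn.intervalIntegrable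
  rw [uIcc_of_le (by norm_num : (0:ℝ) ≤ 1)]
  exact wf_contOn

lemma J_pos : 0 < ∫ s in (0:ℝ)..1, wf s :=
  intervalIntegral_pos_of_pos_on wf_intable (fun s hs => wf_pos hs) one_pos

lemma abs_cpow_half {z : ℂ} (hz : z ≠ 0) :
    ‖z ^ ((1:ℂ)/2)‖ = ‖z‖ ^ ((1:ℝ)/2) := by
  rw [Complex.norm_cpow_of_ne_zero hz]
  norm_num

lemma im_cpow_half_pos {z : ℂ} (hz : 0 < z.im) : 0 < (z ^ ((1:ℂ)/2)).im := by
  have hz0 : z ≠ 0 := by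
    intro h; rw [h] at hz; simp at hz
  have h1 : 0 ≤ z.arg := Complex.arg_nonneg_iff.mpr hz.le
  have harg : 0 < z.arg := by
    rcases h1.lt_or_eq with h | h
    · exact h
    · exact absurd (Complex.arg_eq_zero_iff.mp h.symm).2 hz.ne'
  have harg_le : z.arg ≤ Real.pi := Complex.arg_le_pi z
  rw [Complex.cpow_def_of_ne_zero hz0, Complex.exp_im]
  have him : (Complex.log z * ((1:ℂ)/2)).im = z.arg / 2 := by
    simp [Complex.mul_im, Complex.log_im]
    ring
  rw [him]
  have hsin : 0 < Real.sin (z.arg / 2) :=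
    Real.sin_pos_of_pos_of_lt_pi (by linarith) (by linarith [Real.pi_pos])
  positivity

lemma cpow_half_real_mul {r : ℝ} (hr : 0 < r) {z : ℂ} (hz : z ≠ 0) :
    ((r:ℂ) * z) ^ ((1:ℂ)/2) = (Real.sqrt r : ℂ) * z ^ ((1:ℂ)/2) := by
  have hr0 : (r:ℂ) ≠ 0 := Complex.ofReal_ne_zero.mpr hr.ne'
  rw [Complex.cpow_def_of_ne_zero (mul_ne_zero hr0 hz), Complex.log_ofReal_mul hr hz,
    add_mul, Complex.exp_add, ← Complex.cpow_def_of_ne_zero hz]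
  congr 1
  have h : ((Real.log r : ℂ)) * ((1:ℂ)/2) = ((Real.log r / 2 : ℝ) : ℂ) := by
    push_cast; ring
  rw [h, ← Complex.ofReal_exp]
  congr 1
  rw [Real.sqrt_eq_rpow, Real.rpow_def_of_pos hr]
  ring_nf

lemma I_cpow_half :
    Complex.I ^ ((1:ℂ)/2) =
      ((Real.sqrt 2 / 2 : ℝ) : ℂ) + ((Real.sqrt 2 / 2 : ℝ) : ℂ) * Complex.I := by
  rw [Complex.cpow_def_of_ne_zero Complex.I_ne_zero, Complex.log_I]
  have h : ((Real.pi:ℂ) / 2 * Complex.I * ((1:ℂ)/2)) = ((Real.pi/4 : ℝ) : ℂ) * Complex.I := by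
    push_cast; ring
  rw [h, Complex.exp_mul_I, ← Complex.ofReal_cos, ← Complex.ofReal_sin,
    Real.cos_pi_div_four, Real.sin_pi_div_four]

lemma contOn_integrand {c : ℂ} (hc : c.im ≠ 0) :
    ContinuousOn (fun s : ℝ => (3 * (s:ℂ) + c) ^ ((1:ℂ)/2) * ((wf s : ℝ) : ℂ))
      (Icc (0:ℝ) 1) := by
  apply ContinuousOn.mul
  · intro s _
    apply ContinuousAt.continuousWithinAt
    have hb : ContinuousAt (fun s : ℝ => 3 * (s:ℂ) + c) s := by fun_prop
    have hsp : (3 * (s:ℂ) + c) ∈ Complex.slitPlane := by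
      rw [Complex.mem_slitPlane_iff]
      right
      simp [hc]
    exact hb.cpow continuousAt_const hsp
  · exact Complex.continuous_ofReal.comp_continuousOn wf_contOn

lemma intable_integrand {c : ℂ} (hc : c.im ≠ 0) :
    IntervalIntegrable (fun s : ℝ => (3 * (s:ℂ) + c) ^ ((1:ℂ)/2) * ((wf s : ℝ) : ℂ))
      MeasureTheory.volume 0 1 := by
  apply ContinuousOn.intervalIntegrable
  rw [uIcc_of_le (by norm_num : (0:ℝ) ≤ 1)]
  exact contOn_integrand hc

lemma meas_integrand {c : ℂ} (hc : c.im ≠ 0) :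
    AEStronglyMeasurable (fun s : ℝ => (3 * (s:ℂ) + c) ^ ((1:ℂ)/2) * ((wf s : ℝ) : ℂ))
      (MeasureTheory.volume.restrict (Set.uIoc (0:ℝ) 1)) := by
  rw [uIoc_of_le (by norm_num : (0:ℝ) ≤ 1)]
  exact ((contOn_integrand hc).mono Ioc_subset_Icc_self).aestronglyMeasurable
    measurableSet_Ioc

noncomputable def K (y : ℝ) : ℂ :=
  ∫ s in (0:ℝ)..1, (((3 * s / y : ℝ) : ℂ) + Complex.I) ^ ((1:ℂ)/2) * ((wf s : ℝ) : ℂ)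

lemma contOn_integrand2 (y : ℝ) :
    ContinuousOn (fun s : ℝ =>
      (((3 * s / y : ℝ) : ℂ) + Complex.I) ^ ((1:ℂ)/2) * ((wf s : ℝ) : ℂ)) (Icc (0:ℝ) 1) := by
  apply ContinuousOn.mul
  · intro s _
    apply ContinuousAt.continuousWithinAt
    have hb : ContinuousAt (fun s : ℝ => (((3 * s / y : ℝ) : ℂ) + Complex.I)) s := by fun_prop
    have hsp : (((3 * s / y : ℝ) : ℂ) + Complex.I) ∈ Complex.slitPlane := by
      rw [Complex.mem_slitPlane_iff]; right; simp
    exact hb.cpow continuousAt_const hsp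
  · exact Complex.continuous_ofReal.comp_continuousOn wf_contOn

lemma meas_integrand2 (y : ℝ) :
    AEStronglyMeasurable (fun s : ℝ =>
      (((3 * s / y : ℝ) : ℂ) + Complex.I) ^ ((1:ℂ)/2) * ((wf s : ℝ) : ℂ))
      (MeasureTheory.volume.restrict (Set.uIoc (0:ℝ) 1)) := by
  rw [uIoc_of_le (by norm_num : (0:ℝ) ≤ 1)]
  exact ((contOn_integrand2 y).mono Ioc_subset_Icc_self).aestronglyMeasurable measurableSet_Ioc

lemma four_rpow_half : (4:ℝ) ^ ((1:ℝ)/2) = 2 := by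
  rw [show (4:ℝ) = 2^(2:ℕ) by norm_num, ← Real.rpow_natCast (2:ℝ) 2,
    ← Real.rpow_mul (by norm_num)]
  norm_num

lemma K_tendsto : Tendsto K atTop
    (𝓝 (Complex.I ^ ((1:ℂ)/2) * ((∫ s in (0:ℝ)..1, wf s : ℝ) : ℂ))) := by
  have heq : Complex.I ^ ((1:ℂ)/2) * ((∫ s in (0:ℝ)..1, wf s : ℝ) : ℂ)
      = ∫ s in (0:ℝ)..1, Complex.I ^ ((1:ℂ)/2) * ((wf s : ℝ) : ℂ) := by
    rw [intervalIntegral.integral_const_mul, intervalIntegral.integral_ofReal]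
  rw [heq]
  unfold K
  apply intervalIntegral.tendsto_integral_filter_of_dominated_convergence
      (bound := fun s => 2 * wf s)
  · exact Eventually.of_forall fun y => meas_integrand2 y
  · filter_upwards [eventually_ge_atTop (1:ℝ)] with y hy
    refine Eventually.of_forall fun s hs' => ?_
    rw [uIoc_of_le (by norm_num : (0:ℝ) ≤ 1)] at hs'
    have hz : (((3 * s / y : ℝ) : ℂ) + Complex.I) ≠ 0 := by
      intro h
      have := congrArg Complex.im h
      simp at this
    rw [norm_mul, Complex.norm_real, abs_cpow_half hz]
    have h0 : 0 ≤ 3 * s / y := by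
      have := hs'.1
      positivity
    have habs : ‖(((3 * s / y : ℝ) : ℂ) + Complex.I)‖ ≤ 4 := by
      refine (norm_add_le _ _).trans ?_
      rw [Complex.norm_real, Real.norm_eq_abs, Complex.norm_I, _root_.abs_of_nonneg h0]
      have h3 : 3 * s / y ≤ 3 := by
        rw [div_le_iff₀ (by linarith)]
        nlinarith [hs'.2, hs'.1.le]
      linarith
    have h2 : ‖(((3 * s / y : ℝ) : ℂ) + Complex.I)‖ ^ ((1:ℝ)/2) ≤ 2 := by
      calc ‖(((3 * s / y : ℝ) : ℂ) + Complex.I)‖ ^ ((1:ℝ)/2)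
          ≤ (4:ℝ) ^ ((1:ℝ)/2) :=
            Real.rpow_le_rpow (norm_nonneg _) habs (by norm_num)
        _ = 2 := four_rpow_half
    have hwn := wf_nonneg s
    have hpow_nonneg : (0:ℝ) ≤ ‖(((3 * s / y : ℝ) : ℂ) + Complex.I)‖ ^ ((1:ℝ)/2) :=
      Real.rpow_nonneg (norm_nonneg _) _
    rw [Real.norm_eq_abs, _root_.abs_of_nonneg hwn]
    nlinarith
  · exact wf_intable.const_mul 2
  · refine Eventually.of_forall fun s hs => ?_
    apply Tendsto.mul_const
    have h0 : Tendsto (fun y : ℝ => 3 * s / y) atTop (𝓝 0) :=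
      Tendsto.div_atTop tendsto_const_nhds tendsto_id
    have hb : Tendsto (fun y : ℝ => (((3 * s / y : ℝ) : ℂ) + Complex.I)) atTop
        (𝓝 Complex.I) := by
      have h1 := (Complex.continuous_ofReal.tendsto 0).comp h0
      have h2 := h1.add_const Complex.I
      simpa using h2
    exact hb.cpow tendsto_const_nhds (by rw [Complex.mem_slitPlane_iff]; right; simp)

lemma AplusI_eq {y : ℝ} (hy : 0 < y) :
    AplusI y = -Complex.I * (Complex.I * (y:ℂ) - 3) ^ 2 * ((Real.sqrt y : ℂ) * K y) := by
  unfold AplusI K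
  congr 1
  rw [← intervalIntegral.integral_const_mul]
  refine intervalIntegral.integral_congr fun s _ => ?_
  have hz : (((3 * s / y : ℝ) : ℂ) + Complex.I) ≠ 0 := by
    intro h; have := congrArg Complex.im h; simp at this
  have hy0 : (y:ℂ) ≠ 0 := Complex.ofReal_ne_zero.mpr hy.ne'
  have hbase : (3 * (s:ℂ) + Complex.I * (y:ℂ))
      = (y:ℂ) * (((3 * s / y : ℝ) : ℂ) + Complex.I) := by
    push_cast
    field_simp
  rw [hbase, cpow_half_real_mul hy hz]
  simp only [wf]
  ring

lemma P_tendsto : Tendsto (fun y : ℝ => -Complex.I * (Complex.I - ((3 / y : ℝ) : ℂ)) ^ 2)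
    atTop (𝓝 Complex.I) := by
  have h0 : Tendsto (fun y : ℝ => (3 / y : ℝ)) atTop (𝓝 0) :=
    Tendsto.div_atTop tendsto_const_nhds tendsto_id
  have h1 : Tendsto (fun y : ℝ => ((3 / y : ℝ) : ℂ)) atTop (𝓝 ((0:ℝ):ℂ)) :=
    (Complex.continuous_ofReal.tendsto 0).comp h0
  have hc : Continuous fun z : ℂ => -Complex.I * (Complex.I - z) ^ 2 := by continuity
  have hval : -Complex.I * (Complex.I - ((0:ℝ):ℂ)) ^ 2 = Complex.I := by
    simp [Complex.ext_iff]
  have h2 := (hc.tendsto _).comp h1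
  simp only [Function.comp_def] at h2
  rw [hval] at h2
  exact h2

lemma Phi_tendsto : Tendsto (fun y : ℝ => (AplusI y).im / y ^ ((5:ℝ)/2)) atTop
    (𝓝 (Real.sqrt 2 / 2 * ∫ s in (0:ℝ)..1, wf s)) := by
  set J : ℝ := ∫ s in (0:ℝ)..1, wf s with hJ
  have hQ : Tendsto (fun y : ℝ => AplusI y / ((y ^ ((5:ℝ)/2) : ℝ) : ℂ)) atTop
      (𝓝 (Complex.I * (Complex.I ^ ((1:ℂ)/2) * (J:ℂ)))) := by
    refine (P_tendsto.mul K_tendsto).congr' ?_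
    filter_upwards [eventually_gt_atTop (0:ℝ)] with y hy
    have hy0 : (y:ℂ) ≠ 0 := Complex.ofReal_ne_zero.mpr hy.ne'
    have hs0 : (Real.sqrt y : ℂ) ≠ 0 :=
      Complex.ofReal_ne_zero.mpr (Real.sqrt_pos.mpr hy).ne'
    have h52 : ((y ^ ((5:ℝ)/2) : ℝ) : ℂ) = (y:ℂ) ^ 2 * (Real.sqrt y : ℂ) := by
      have h : y ^ ((5:ℝ)/2) = y ^ (2:ℕ) * Real.sqrt y := by
        rw [Real.sqrt_eq_rpow, ← Real.rpow_natCast y 2, ← Real.rpow_add hy]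
        norm_num
      rw [h]; push_cast; ring
    rw [AplusI_eq hy, h52]
    have hcast : ((3 / y : ℝ) : ℂ) = 3 / (y:ℂ) := by push_cast; ring
    rw [hcast]
    field_simp
  have him : (fun y : ℝ => (AplusI y).im / y ^ ((5:ℝ)/2))
      = fun y : ℝ => (AplusI y / ((y ^ ((5:ℝ)/2) : ℝ) : ℂ)).im := by
    funext y; rw [Complex.div_ofReal_im]
  rw [him]
  have hcomp := (Complex.continuous_im.tendsto _).comp hQ
  have hval : (Complex.I * (Complex.I ^ ((1:ℂ)/2) * (J:ℂ))).im = Real.sqrt 2 / 2 * J := by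
    rw [I_cpow_half]
    simp [Complex.mul_im, Complex.mul_re]
  rw [← hval]
  exact hcomp

lemma contAt_AplusI {y₀ : ℝ} (hy0 : 0 < y₀) : ContinuousAt AplusI y₀ := by
  have hint : ContinuousAt (fun y : ℝ =>
      ∫ s in (0:ℝ)..1, (3 * (s:ℂ) + Complex.I * (y:ℂ)) ^ ((1:ℂ)/2) * ((wf s : ℝ) : ℂ)) y₀ := by
    apply intervalIntegral.continuousAt_of_dominated_interval
        (bound := fun s => (4 + |y₀|) ^ ((1:ℝ)/2) * wf s)
    · filter_upwards [eventually_gt_nhds hy0] with y hy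
      exact meas_integrand (c := Complex.I * (y:ℂ)) (by simp [hy.ne'])
    · filter_upwards [eventually_gt_nhds hy0,
        Ioo_mem_nhds (by linarith : y₀ - 1 < y₀) (by linarith : y₀ < y₀ + 1)] with y hy hy'
      refine Eventually.of_forall fun s hs' => ?_
      rw [uIoc_of_le (by norm_num : (0:ℝ) ≤ 1)] at hs'
      have hz : (3 * (s:ℂ) + Complex.I * (y:ℂ)) ≠ 0 := by
        intro h; have := congrArg Complex.im h; simp [hy.ne'] at this
      rw [norm_mul, Complex.norm_real, abs_cpow_half hz]
      have habs : ‖(3 * (s:ℂ) + Complex.I * (y:ℂ))‖ ≤ 4 + |y₀| := by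
        refine (norm_add_le _ _).trans ?_
        have e1 : (3 * (s:ℂ)) = ((3 * s : ℝ) : ℂ) := by push_cast; ring
        rw [e1, Complex.norm_real, Real.norm_eq_abs, norm_mul, Complex.norm_I, one_mul, Complex.norm_real,
          Real.norm_eq_abs]
        have hb1 : |3 * s| ≤ 3 := by
          rw [_root_.abs_of_nonneg (by linarith [hs'.1.le] : (0:ℝ) ≤ 3 * s)]
          linarith [hs'.2]
        have hb2 : |y| ≤ |y₀| + 1 := by
          rw [_root_.abs_of_pos hy]
          calc y ≤ y₀ + 1 := hy'.2.le
            _ ≤ |y₀| + 1 := by linarith [le_abs_self y₀]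
        linarith
      have h2 : ‖(3 * (s:ℂ) + Complex.I * (y:ℂ))‖ ^ ((1:ℝ)/2)
          ≤ (4 + |y₀|) ^ ((1:ℝ)/2) :=
        Real.rpow_le_rpow (norm_nonneg _) habs (by norm_num)
      have hwn := wf_nonneg s
      have hpn : (0:ℝ) ≤ ‖(3 * (s:ℂ) + Complex.I * (y:ℂ))‖ ^ ((1:ℝ)/2) :=
        Real.rpow_nonneg (norm_nonneg _) _
      rw [Real.norm_eq_abs, _root_.abs_of_nonneg hwn]
      nlinarith
    · exact wf_intable.const_mul _
    · refine Eventually.of_forall fun s _ => ?_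
      have hb : ContinuousAt (fun y : ℝ => 3 * (s:ℂ) + Complex.I * (y:ℂ)) y₀ := by fun_prop
      exact ContinuousAt.mul
        (hb.cpow continuousAt_const
          (by rw [Complex.mem_slitPlane_iff]; right; simp [hy0.ne'])) continuousAt_const
  have hpoly : ContinuousAt (fun y : ℝ => -Complex.I * (Complex.I * (y:ℂ) - 3) ^ 2) y₀ := by
    fun_prop
  exact hpoly.mul hint

end PhiAux

/-- `Φ(iy) = Im A₊(iy)` satisfies: at `y = 3`,
`Im A₊(3i) = −18 ∫₀¹ Im √(3s+3i) dμ(s) < 0`; as `y → +∞`,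
`Φ(iy) ∼ (√2/2) y^{5/2} ∫₀¹ dμ(s)`; hence there exists `y* > 3` with `Φ(iy*) = 0`. -/
theorem Phi_sign_change_and_zero :
    (AplusI 3).im =
      -18 * ∫ s in (0:ℝ)..1,
        (((3 * (s : ℂ)) + 3 * Complex.I) ^ ((1 : ℂ) / 2)).im *
          (Real.sqrt (s * (1 - s ^ 2)) / (1 + s) ^ 4) ∧
    (AplusI 3).im < 0 ∧
    Tendsto (fun y : ℝ => (AplusI y).im / y ^ ((5 : ℝ) / 2)) atTop
      (nhds (Real.sqrt 2 / 2 *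
        ∫ s in (0:ℝ)..1, Real.sqrt (s * (1 - s ^ 2)) / (1 + s) ^ 4)) ∧
    (∃ y : ℝ, 3 < y ∧ (AplusI y).im = 0) := by
  have h01 : (0:ℝ) ≤ 1 := by norm_num
  have hint3 : IntervalIntegrable
      (fun s : ℝ => ((3 * (s:ℂ)) + 3 * Complex.I) ^ ((1:ℂ)/2) * ((PhiAux.wf s : ℝ) : ℂ))
      MeasureTheory.volume 0 1 := PhiAux.intable_integrand (by simp)
  have hA3 : AplusI 3 = (-18:ℂ) * ∫ s in (0:ℝ)..1,
      ((3 * (s:ℂ)) + 3 * Complex.I) ^ ((1:ℂ)/2) * ((PhiAux.wf s : ℝ) : ℂ) := by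
    unfold AplusI
    simp only [PhiAux.wf, Complex.ofReal_ofNat,
      show Complex.I * (3:ℂ) = 3 * Complex.I from mul_comm _ _]
    rw [show -Complex.I * (3 * Complex.I - 3) ^ 2 = (-18:ℂ) by
      simp [Complex.ext_iff, pow_two, Complex.mul_re, Complex.mul_im]; norm_num]
  have h1 : (AplusI 3).im = -18 * ∫ s in (0:ℝ)..1,
      (((3 * (s:ℂ)) + 3 * Complex.I) ^ ((1:ℂ)/2)).im * (PhiAux.wf s) := by
    rw [hA3]
    have hcomm := Complex.imCLM.intervalIntegral_comp_comm hint3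
    have hZ : (∫ s in (0:ℝ)..1,
        ((3 * (s:ℂ)) + 3 * Complex.I) ^ ((1:ℂ)/2) * ((PhiAux.wf s : ℝ) : ℂ)).im
        = ∫ s in (0:ℝ)..1,
        (((3 * (s:ℂ)) + 3 * Complex.I) ^ ((1:ℂ)/2)).im * (PhiAux.wf s) := by
      calc (∫ s in (0:ℝ)..1,
          ((3 * (s:ℂ)) + 3 * Complex.I) ^ ((1:ℂ)/2) * ((PhiAux.wf s : ℝ) : ℂ)).im
          = ∫ s in (0:ℝ)..1, Complex.imCLM
              (((3 * (s:ℂ)) + 3 * Complex.I) ^ ((1:ℂ)/2) * ((PhiAux.wf s : ℝ) : ℂ)) := by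
            rw [hcomm]; rfl
        _ = ∫ s in (0:ℝ)..1,
              (((3 * (s:ℂ)) + 3 * Complex.I) ^ ((1:ℂ)/2)).im * (PhiAux.wf s) := by
            refine intervalIntegral.integral_congr fun s _ => ?_
            simp [Complex.mul_im]
    rw [show ∀ z : ℂ, ((-18:ℂ) * z).im = -18 * z.im from fun z => by
      simp [Complex.mul_im], hZ]
  have hpos : 0 < ∫ s in (0:ℝ)..1,
      (((3 * (s:ℂ)) + 3 * Complex.I) ^ ((1:ℂ)/2)).im * (PhiAux.wf s) := by
    apply intervalIntegral.intervalIntegral_pos_of_pos_on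
    · apply ContinuousOn.intervalIntegrable
      rw [Set.uIcc_of_le h01]
      apply ContinuousOn.mul
      · apply Complex.continuous_im.comp_continuousOn
        intro s _
        apply ContinuousAt.continuousWithinAt
        have hb : ContinuousAt (fun s : ℝ => 3 * (s:ℂ) + 3 * Complex.I) s := by fun_prop
        exact hb.cpow continuousAt_const
          (by rw [Complex.mem_slitPlane_iff]; right; simp)
      · exact PhiAux.wf_contOn
    · intro s hs
      have him : (0:ℝ) < ((3 * (s:ℂ)) + 3 * Complex.I).im := by simp
      exact mul_pos (PhiAux.im_cpow_half_pos him) (PhiAux.wf_pos hs)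
    · norm_num
  have h2 : (AplusI 3).im < 0 := by
    rw [h1]; linarith
  have hlimpos : 0 < Real.sqrt 2 / 2 * ∫ s in (0:ℝ)..1, PhiAux.wf s :=
    mul_pos (by positivity) PhiAux.J_pos
  have hev : ∀ᶠ y in atTop, 0 < (AplusI y).im / y ^ ((5:ℝ)/2) :=
    PhiAux.Phi_tendsto.eventually (eventually_gt_nhds hlimpos)
  obtain ⟨M, hMpos, hM3⟩ := (hev.and (eventually_gt_atTop (3:ℝ))).exists
  have hMim : 0 < (AplusI M).im := by
    have hMy : (0:ℝ) < M ^ ((5:ℝ)/2) := Real.rpow_pos_of_pos (by linarith) _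
    rcases div_pos_iff.mp hMpos with ⟨ha, _⟩ | ⟨_, hb⟩
    · exact ha
    · linarith
  have hcont : ContinuousOn (fun y : ℝ => (AplusI y).im) (Set.Icc 3 M) := by
    intro y hy
    have hy0 : (0:ℝ) < y := by linarith [hy.1]
    exact (Complex.continuous_im.continuousAt.comp
      (PhiAux.contAt_AplusI hy0)).continuousWithinAt
  have h0mem : (0:ℝ) ∈ Set.Icc ((AplusI 3).im) ((AplusI M).im) := ⟨h2.le, hMim.le⟩
  obtain ⟨x, hx, hfx⟩ := intermediate_value_Icc hM3.le hcont h0mem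
  have hx3 : 3 < x := by
    rcases hx.1.lt_or_eq with h | h
    · exact h
    · exfalso
      rw [← h] at hfx
      simp only at hfx
      linarith [h2, hfx.ge]
  exact ⟨h1, h2, PhiAux.Phi_tendsto, x, hx3, hfx⟩
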